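/- For all positive real numbers a, b with a ≠ b, the strict inequality (4/π − 1)·C(a,b) + (1 − (4/π − 1))·A(a,b) < T(a,b) holds. -/

import Mathlib

open Real

/-- The Seiffert mean of two positive reals. -/
noncomputable def seiffertT (a b : ℝ) : ℝ := (a - b) / (2 * Real.arctan ((a - b) / (a + b)))

/-- The arithmetic mean of two positive reals. -/
noncomputable def arithMean (a b : ℝ) : ℝ := (a + b) / 2

/-- The contra-harmonic mean of two positive reals. -/
noncomputable def contraharmonicMean (a b : ℝ) : ℝ := (a ^ 2 + b ^ 2) / (a + b)

lemma stmt5_key_deriv (c x : ℝ) (hc : 0 < c) :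
    HasDerivAt (fun t : ℝ => t / (1 + c * t ^ 2) - arctan t)
      ((1 - c * x ^ 2) / (1 + c * x ^ 2) ^ 2 - 1 / (1 + x ^ 2)) x := by
  have hden : (0:ℝ) < 1 + c * x ^ 2 := by positivity
  have h1 : HasDerivAt (fun t : ℝ => 1 + c * t ^ 2) (c * (2 * x)) x := by
    simpa using ((hasDerivAt_pow 2 x).const_mul c).const_add 1
  have h2 : HasDerivAt (fun t : ℝ => t / (1 + c * t ^ 2))
      ((1 * (1 + c * x ^ 2) - x * (c * (2 * x))) / (1 + c * x ^ 2) ^ 2) x :=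
    (hasDerivAt_id x).div h1 (ne_of_gt hden)
  have h3 := h2.sub (Real.hasDerivAt_arctan x)
  convert h3 using 1
  all_goals first | rfl | (field_simp; ring)

lemma stmt5_key (t : ℝ) (ht0 : 0 < t) (ht1 : t < 1) :
    (1 + (4 / π - 1) * t ^ 2) * arctan t < t := by
  set c : ℝ := 4 / π - 1 with hcdef
  have hπ0 : (0:ℝ) < π := pi_pos
  have hπl : π < 3.15 := pi_lt_d2
  have hπg : (3.141592:ℝ) < π := pi_gt_d6
  have hcπ : c * π = 4 - π := by rw [hcdef]; field_simp
  have hc : 0 < c := by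
    rw [hcdef, sub_pos, lt_div_iff₀ hπ0]; linarith
  have hc3 : 3 * c < 1 := by nlinarith
  have hc1 : 1 - 3 * c < c * (1 + c) := by nlinarith [sq_nonneg (c*π - (4-π))]
  set f : ℝ → ℝ := fun t => t / (1 + c * t ^ 2) - arctan t with hfdef
  have hcont : Continuous f := by
    apply Continuous.sub
    · exact continuous_id.div (by continuity) (fun x => by positivity)
    · exact Real.continuous_arctan
  have hderiv : ∀ x : ℝ, deriv f x =
      (1 - c * x ^ 2) / (1 + c * x ^ 2) ^ 2 - 1 / (1 + x ^ 2) :=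
    fun x => (stmt5_key_deriv c x hc).deriv
  set t₀ : ℝ := Real.sqrt ((1 - 3 * c) / (c * (1 + c))) with ht₀def
  have harg : 0 < (1 - 3 * c) / (c * (1 + c)) := by
    apply div_pos (by linarith) (by positivity)
  have ht₀pos : 0 < t₀ := Real.sqrt_pos.mpr harg
  have ht₀sq : t₀ ^ 2 = (1 - 3 * c) / (c * (1 + c)) := Real.sq_sqrt harg.le
  have ht₀lt1 : t₀ < 1 := by
    rw [ht₀def]
    have : (1 - 3 * c) / (c * (1 + c)) < 1 := by
      rw [div_lt_one (by positivity)]; linarith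
    calc Real.sqrt ((1 - 3 * c) / (c * (1 + c))) < Real.sqrt 1 :=
          Real.sqrt_lt_sqrt harg.le this
      _ = 1 := Real.sqrt_one
  have hsign : ∀ x : ℝ, 0 < x →
      deriv f x = x ^ 2 * ((1 - 3 * c) - c * (1 + c) * x ^ 2) /
        ((1 + c * x ^ 2) ^ 2 * (1 + x ^ 2)) := by
    intro x hx
    rw [hderiv]
    have h1 : (0:ℝ) < 1 + c * x ^ 2 := by positivity
    have h2 : (0:ℝ) < 1 + x ^ 2 := by positivity
    field_simp
    ring
  have hmono : StrictMonoOn f (Set.Icc 0 t₀) := by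
    apply strictMonoOn_of_deriv_pos (convex_Icc 0 t₀) hcont.continuousOn
    intro x hx
    rw [interior_Icc] at hx
    rw [hsign x hx.1]
    have hx2 : x ^ 2 < t₀ ^ 2 := by
      apply sq_lt_sq' (by linarith [hx.1, ht₀pos]) hx.2
    rw [ht₀sq] at hx2
    have hfac : 0 < (1 - 3 * c) - c * (1 + c) * x ^ 2 := by
      rw [lt_div_iff₀ (by positivity : (0:ℝ) < c * (1 + c))] at hx2
      nlinarith
    have := hx.1
    positivity
  have hanti : StrictAntiOn f (Set.Icc t₀ 1) := by
    apply strictAntiOn_of_deriv_neg (convex_Icc t₀ 1) hcont.continuousOn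
    intro x hx
    rw [interior_Icc] at hx
    have hx0 : 0 < x := lt_trans ht₀pos hx.1
    rw [hsign x hx0]
    have hx2 : t₀ ^ 2 < x ^ 2 := by
      apply sq_lt_sq' (by linarith [hx.1, ht₀pos, hx.2]) hx.1
    rw [ht₀sq] at hx2
    have hfac : (1 - 3 * c) - c * (1 + c) * x ^ 2 < 0 := by
      rw [div_lt_iff₀ (by positivity : (0:ℝ) < c * (1 + c))] at hx2
      nlinarith
    have hnum : x ^ 2 * ((1 - 3 * c) - c * (1 + c) * x ^ 2) < 0 :=
      mul_neg_of_pos_of_neg (by positivity) hfac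
    exact div_neg_of_neg_of_pos hnum (by positivity)
  have hf0 : f 0 = 0 := by simp [hfdef]
  have hf1 : f 1 = 0 := by
    have h1c : 1 + c = 4 / π := by rw [hcdef]; ring
    simp only [hfdef, one_pow, mul_one, h1c, Real.arctan_one]
    rw [one_div_div]
    ring
  have hft : 0 < f t := by
    rcases le_or_gt t t₀ with h | h
    · have := hmono (⟨le_refl 0, ht₀pos.le⟩ : (0:ℝ) ∈ Set.Icc 0 t₀)
        (⟨ht0.le, h⟩ : t ∈ Set.Icc 0 t₀) ht0
      rwa [hf0] at this
    · have := hanti (⟨h.le, ht1.le⟩ : t ∈ Set.Icc t₀ 1)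
        (⟨ht₀lt1.le, le_refl 1⟩ : (1:ℝ) ∈ Set.Icc t₀ 1) ht1
      rwa [hf1] at this
  have hdpos : (0:ℝ) < 1 + c * t ^ 2 := by positivity
  have : arctan t < t / (1 + c * t ^ 2) := by
    simp only [hfdef] at hft
    linarith
  calc (1 + c * t ^ 2) * arctan t < (1 + c * t ^ 2) * (t / (1 + c * t ^ 2)) :=
        mul_lt_mul_of_pos_left this hdpos
    _ = t := by field_simp

lemma stmt5_main (a b : ℝ) (ha : 0 < a) (hb : 0 < b) (hba : b < a) :
    (4 / π - 1) * contraharmonicMean a b + (1 - (4 / π - 1)) * arithMean a b < seiffertT a b := by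
  set c : ℝ := 4 / π - 1 with hcdef
  set s : ℝ := a + b with hsdef
  set t : ℝ := (a - b) / (a + b) with htdef
  have hs : 0 < s := by positivity
  have ht0 : 0 < t := div_pos (by linarith) hs
  have ht1 : t < 1 := by
    rw [htdef, div_lt_one hs]; linarith
  have hat : 0 < arctan t := by
    rw [← Real.arctan_zero]; exact Real.arctan_strictMono ht0
  have hd : a - b = s * t := by
    rw [htdef]; field_simp; rw [hsdef]
  have hLHS : c * contraharmonicMean a b + (1 - c) * arithMean a b
      = (s / 2) * (1 + c * t ^ 2) := by
    unfold contraharmonicMean arithMean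
    rw [htdef, hsdef]
    have : a + b ≠ 0 := ne_of_gt hs
    field_simp
    ring
  rw [hLHS, seiffertT, ← hsdef, ← htdef, hd]
  rw [lt_div_iff₀ (by positivity : (0:ℝ) < 2 * arctan t)]
  have hk := stmt5_key t ht0 ht1
  calc s / 2 * (1 + c * t ^ 2) * (2 * arctan t)
      = s * ((1 + c * t ^ 2) * arctan t) := by ring
    _ < s * t := mul_lt_mul_of_pos_left hk hs

theorem stmt_5 (a b : ℝ) (ha : 0 < a) (hb : 0 < b) (hab : a ≠ b) :
    (4 / π - 1) * contraharmonicMean a b + (1 - (4 / π - 1)) * arithMean a b < seiffertT a b := by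
  rcases hab.lt_or_gt with h | h
  · have := stmt5_main b a hb ha h
    have hC : contraharmonicMean a b = contraharmonicMean b a := by
      unfold contraharmonicMean; rw [add_comm (a^2), add_comm a]
    have hA : arithMean a b = arithMean b a := by
      unfold arithMean; rw [add_comm]
    have hT : seiffertT a b = seiffertT b a := by
      unfold seiffertT
      rw [add_comm a b]
      have : a - b = -(b - a) := by ring
      simp only [this, neg_div, Real.arctan_neg, mul_neg]
      rw [div_neg, neg_neg]
    rw [hC, hA, hT]; exact this
  · exact stmt5_main a b ha hb h
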